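/- The function γ(r) = 1 - 2·(r/(r+1))^r on (0,1) is strictly increasing, negative, and satisfies γ(r) → 0 as r → 1⁻. -/

import Mathlib

open Real Set Filter Topology

private lemma g_mono : StrictMonoOn (fun r : ℝ => r * (Real.log (r + 1) - Real.log r))
    (Set.Ioi 0) := by
  apply strictMonoOn_of_deriv_pos (convex_Ioi 0)
  · apply ContinuousOn.mul continuousOn_id
    apply ContinuousOn.sub
    · exact Real.continuousOn_log.comp (by fun_prop) (fun x hx => by
        simp only [mem_Ioi] at hx; simp; positivity)
    · exact Real.continuousOn_log.mono (fun x hx => by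
        simp only [mem_Ioi, mem_compl_iff, mem_singleton_iff] at *; linarith)
  · intro x hx
    rw [interior_Ioi, mem_Ioi] at hx
    have hx1 : (0:ℝ) < x + 1 := by linarith
    have h1 : HasDerivAt (fun r : ℝ => Real.log (r + 1)) (1 / (x + 1)) x := by
      have := ((hasDerivAt_id x).add_const 1).log (ne_of_gt hx1)
      simpa using this
    have h2 : HasDerivAt Real.log x⁻¹ x := Real.hasDerivAt_log (ne_of_gt hx)
    have hg : HasDerivAt (fun r : ℝ => r * (Real.log (r + 1) - Real.log r))
        (1 * (Real.log (x + 1) - Real.log x) + x * (1 / (x + 1) - x⁻¹)) x :=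
      (hasDerivAt_id x).mul (h1.sub h2)
    rw [hg.deriv]
    have hlog : Real.log (x / (x + 1)) < x / (x + 1) - 1 := by
      apply Real.log_lt_sub_one_of_pos (by positivity)
      intro h
      rw [div_eq_one_iff_eq (ne_of_gt hx1)] at h
      linarith
    rw [Real.log_div (ne_of_gt hx) (ne_of_gt hx1)] at hlog
    have hxx : x / (x + 1) - 1 = -(1 / (x + 1)) := by field_simp; ring
    have h3 : x * (1 / (x + 1) - x⁻¹) = x / (x + 1) - 1 := by field_simp
    rw [h3, hxx]
    nlinarith [hlog, hxx]

private lemma f_eq (r : ℝ) (hr : 0 < r) :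
    (r / (r + 1)) ^ r = Real.exp (-(r * (Real.log (r + 1) - Real.log r))) := by
  have hr1 : (0:ℝ) < r + 1 := by linarith
  rw [Real.rpow_def_of_pos (by positivity), Real.log_div (ne_of_gt hr) (ne_of_gt hr1)]
  ring_nf

/-- The function `γ(r) = 1 - 2 (r/(r+1))^r` on `(0,1)` is strictly increasing, negative,
and tends to `0` as `r → 1⁻`. -/
theorem stmt_7 :
    StrictMonoOn (fun r : ℝ => 1 - 2 * (r / (r + 1)) ^ r) (Set.Ioo 0 1) ∧
      (∀ r ∈ Set.Ioo (0 : ℝ) 1, 1 - 2 * (r / (r + 1)) ^ r < 0) ∧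
      Tendsto (fun r : ℝ => 1 - 2 * (r / (r + 1)) ^ r)
        (nhdsWithin 1 (Set.Iio 1)) (nhds 0) := by
  refine ⟨?_, ?_, ?_⟩
  · intro a ha b hb hab
    have hg := g_mono (mem_Ioi.mpr ha.1) (mem_Ioi.mpr hb.1) hab
    simp only
    rw [f_eq a ha.1, f_eq b hb.1]
    have := Real.exp_lt_exp.mpr (neg_lt_neg hg)
    linarith
  · intro r hr
    have hg := g_mono (mem_Ioi.mpr hr.1) (mem_Ioi.mpr one_pos) hr.2
    simp only [Real.log_one, one_mul, sub_zero] at hg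
    have h2 : (1:ℝ) + 1 = 2 := by norm_num
    rw [h2] at hg
    have hexp : Real.exp (-Real.log 2) < Real.exp (-(r * (Real.log (r + 1) - Real.log r))) :=
      Real.exp_lt_exp.mpr (by linarith)
    rw [Real.exp_neg, Real.exp_log (by norm_num : (0:ℝ) < 2)] at hexp
    rw [f_eq r hr.1]
    nlinarith [hexp]
  · have hc : ContinuousAt (fun r : ℝ => 1 - 2 * (r / (r + 1)) ^ r) 1 := by
      apply ContinuousAt.sub continuousAt_const
      apply ContinuousAt.mul continuousAt_const
      apply ContinuousAt.rpow (continuousAt_id.div (by fun_prop) (by norm_num)) continuousAt_id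
      left; norm_num
    have h := hc.tendsto.mono_left (nhdsWithin_le_nhds (s := Set.Iio 1))
    have hv : (1:ℝ) - 2 * (1 / (1 + 1)) ^ (1:ℝ) = 0 := by
      norm_num [Real.rpow_one]
    rwa [hv] at h
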